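/- Let t₀ be an m×m real matrix with no real eigenvalues, i.e. det(t₀ - λ·1) ≠ 0 for every λ ∈ ℝ. Then: (1) for every θ ∈ ℝ the matrix cos θ · 1 + sin θ · t₀ is invertible; (2) the function t(θ) = (cos θ · t₀ - sin θ · 1) · (cos θ · 1 + sin θ · t₀)⁻¹ satisfies t(0) = t₀ and t(θ + π) = t(θ) for all θ ∈ ℝ; and (3) t is differentiable in θ with derivative t'(θ) = -(1 + t(θ)²) at every θ ∈ ℝ. -/

import Mathlib

open Matrix

/-- The explicit solution of the matrix Riccati equation `t' = -(1 + t²)`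
with initial condition `t₀`. -/
noncomputable def riccatiFlow (m : ℕ) (t₀ : Matrix (Fin m) (Fin m) ℝ) (θ : ℝ) :
    Matrix (Fin m) (Fin m) ℝ :=
  (Real.cos θ • t₀ - Real.sin θ • 1) * (Real.cos θ • (1 : Matrix (Fin m) (Fin m) ℝ) + Real.sin θ • t₀)⁻¹

attribute [local instance] Matrix.linftyOpNormedRing Matrix.linftyOpNormedAlgebra

noncomputable def entryCLM (m : ℕ) (i j : Fin m) : Matrix (Fin m) (Fin m) ℝ →L[ℝ] ℝ :=
  LinearMap.toContinuousLinearMap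
    { toFun := fun M => M i j, map_add' := fun _ _ => rfl, map_smul' := fun _ _ => rfl }

/-- If `t₀` is a real square matrix with no real eigenvalues, then
`t(θ) = (cos θ · t₀ - sin θ · 1)(cos θ · 1 + sin θ · t₀)⁻¹` is a globally
defined, `π`-periodic solution of the matrix Riccati equation
`dt/dθ = -(1 + t²)` with `t(0) = t₀` (derivatives taken entrywise). -/
theorem riccati_matrix_global_solution (m : ℕ) (t₀ : Matrix (Fin m) (Fin m) ℝ)
    (h : ∀ lam : ℝ, (t₀ - lam • (1 : Matrix (Fin m) (Fin m) ℝ)).det ≠ 0) :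
    (∀ θ : ℝ, IsUnit (Real.cos θ • (1 : Matrix (Fin m) (Fin m) ℝ) + Real.sin θ • t₀)) ∧
    riccatiFlow m t₀ 0 = t₀ ∧
    (∀ θ : ℝ, riccatiFlow m t₀ (θ + Real.pi) = riccatiFlow m t₀ θ) ∧
    (∀ (θ : ℝ) (i j : Fin m),
      HasDerivAt (fun θ' => riccatiFlow m t₀ θ' i j)
        ((-((1 : Matrix (Fin m) (Fin m) ℝ) + (riccatiFlow m t₀ θ) ^ 2)) i j) θ) := by
  set A : ℝ → Matrix (Fin m) (Fin m) ℝ :=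
    fun θ => Real.cos θ • (1 : Matrix (Fin m) (Fin m) ℝ) + Real.sin θ • t₀ with hAdef
  set N : ℝ → Matrix (Fin m) (Fin m) ℝ :=
    fun θ => Real.cos θ • t₀ - Real.sin θ • (1 : Matrix (Fin m) (Fin m) ℝ) with hNdef
  have hA : ∀ θ : ℝ, IsUnit (A θ) := by
    intro θ
    rw [Matrix.isUnit_iff_isUnit_det, isUnit_iff_ne_zero]
    rcases eq_or_ne (Real.sin θ) 0 with hs | hs
    · have hc : Real.cos θ ≠ 0 := by
        intro hc
        have := Real.sin_sq_add_cos_sq θ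
        rw [hs, hc] at this; norm_num at this
      have hE : A θ = Real.cos θ • (1 : Matrix (Fin m) (Fin m) ℝ) := by simp [hAdef, hs]
      rw [hE, Matrix.det_smul, Matrix.det_one, mul_one]
      exact pow_ne_zero _ hc
    · have hE : A θ = Real.sin θ •
          (t₀ - (-(Real.cos θ / Real.sin θ)) • (1 : Matrix (Fin m) (Fin m) ℝ)) := by
        rw [hAdef]
        rw [smul_sub, smul_smul]
        have h3 : Real.sin θ * -(Real.cos θ / Real.sin θ) = -Real.cos θ := by
          field_simp
        rw [h3]
        module
      rw [hE, Matrix.det_smul]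
      exact mul_ne_zero (pow_ne_zero _ hs) (h _)
  refine ⟨hA, ?_, ?_, ?_⟩
  · simp [riccatiFlow]
  · -- periodicity
    intro θ
    have hc := Real.cos_add_pi θ
    have hs := Real.sin_add_pi θ
    have hdet : IsUnit (A θ).det := (Matrix.isUnit_iff_isUnit_det _).1 (hA θ)
    have hAn : (Real.cos (θ + Real.pi) • (1 : Matrix (Fin m) (Fin m) ℝ)
        + Real.sin (θ + Real.pi) • t₀) = -(A θ) := by
      rw [hc, hs, hAdef]; module
    have hNn : (Real.cos (θ + Real.pi) • t₀
        - Real.sin (θ + Real.pi) • (1 : Matrix (Fin m) (Fin m) ℝ)) = -(N θ) := by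
      rw [hc, hs, hNdef]; module
    have hinv : (-(A θ))⁻¹ = -(A θ)⁻¹ := by
      apply Matrix.inv_eq_left_inv
      rw [neg_mul_neg, Matrix.nonsing_inv_mul _ hdet]
    show (Real.cos (θ + Real.pi) • t₀ - Real.sin (θ + Real.pi) • (1 : Matrix (Fin m) (Fin m) ℝ)) *
        (Real.cos (θ + Real.pi) • (1 : Matrix (Fin m) (Fin m) ℝ) + Real.sin (θ + Real.pi) • t₀)⁻¹
        = _
    rw [hAn, hNn, hinv, neg_mul_neg]
    rfl
  · -- derivative
    intro θ i j
    haveI : CompleteSpace (Matrix (Fin m) (Fin m) ℝ) :=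
      FiniteDimensional.complete ℝ _
    have hAd : HasDerivAt A (N θ) θ := by
      have h1 := (Real.hasDerivAt_cos θ).smul_const (1 : Matrix (Fin m) (Fin m) ℝ)
      have h2 := (Real.hasDerivAt_sin θ).smul_const t₀
      have hsum := h1.add h2
      refine hsum.congr_deriv ?_
      rw [hNdef]; module
    have hNd : HasDerivAt N (-(A θ)) θ := by
      have h1 := (Real.hasDerivAt_cos θ).smul_const t₀
      have h2 := (Real.hasDerivAt_sin θ).smul_const (1 : Matrix (Fin m) (Fin m) ℝ)
      have hsum := h1.sub h2
      refine hsum.congr_deriv ?_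
      rw [hAdef]; module
    obtain ⟨u, hu⟩ := hA θ
    have hinvd : HasDerivAt (fun θ' => Ring.inverse (A θ'))
        (-(Ring.inverse (A θ) * N θ * Ring.inverse (A θ))) θ := by
      have hf : HasFDerivAt Ring.inverse
          (-ContinuousLinearMap.mulLeftRight ℝ (Matrix (Fin m) (Fin m) ℝ) ↑u⁻¹ ↑u⁻¹) (A θ) := by
        rw [← hu]; exact hasFDerivAt_ringInverse u
      have hcomp := hf.comp_hasDerivAt θ hAd
      refine hcomp.congr_deriv ?_
      simp [Ring.inverse_unit, ← hu]
    have hFd : HasDerivAt (fun θ' => N θ' * Ring.inverse (A θ'))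
        (-(A θ) * Ring.inverse (A θ) + N θ * -(Ring.inverse (A θ) * N θ * Ring.inverse (A θ)))
        θ := hNd.mul hinvd
    have hflow : ∀ θ' : ℝ, riccatiFlow m t₀ θ' = N θ' * Ring.inverse (A θ') := by
      intro θ'
      rw [riccatiFlow, Matrix.nonsing_inv_eq_ringInverse]
    have hval : -(A θ) * Ring.inverse (A θ)
        + N θ * -(Ring.inverse (A θ) * N θ * Ring.inverse (A θ))
        = -((1 : Matrix (Fin m) (Fin m) ℝ) + (riccatiFlow m t₀ θ) ^ 2) := by
      have hAi : A θ * Ring.inverse (A θ) = 1 := Ring.mul_inverse_cancel _ (hA θ)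
      rw [hflow θ, pow_two, neg_mul, hAi]
      noncomm_ring
    rw [hval] at hFd
    have hentry := (entryCLM m i j).hasFDerivAt.comp_hasDerivAt θ hFd
    have heq : (fun θ' => riccatiFlow m t₀ θ' i j)
        = (⇑(entryCLM m i j) ∘ fun θ' => N θ' * Ring.inverse (A θ')) := by
      funext θ'
      simp only [Function.comp_apply, hflow θ']
      rfl
    rw [heq]
    exact hentry
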